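/- Let G be a relation graph, T(L) a G-realization, T(R) ∈ B_G(T(L)), and (k,i) with 1 ≤ i ≤ k ≤ n−1. (a) If T(R+δ^{ki}) ∈ B_G(T(L)) and E⁺_{G(R)} ⊆ E⁺_{G(R+δ^{ki})}, then ∏_{j=1}^{k+1}(r_{ki} − r_{k+1,j}) ≠ 0; hence T(R+δ^{ki}) appears with nonzero coefficient in E_{k,k+1}(T(R)), i.e., T(R) ≼_(1) T(R+δ^{ki}). (b) If T(R−δ^{ki}) ∈ B_G(T(L)) and E⁺_{G(R)} ⊆ E⁺_{G(R−δ^{ki})}, then ∏_{j=1}^{k−1}(r_{ki} − r_{k−1,j}) ≠ 0; hence T(R−δ^{ki}) appears with nonzero coefficient in E_{k+1,k}(T(R)), i.e., T(R) ≼_(1) T(R−δ^{ki}). -/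
import Mathlib


namespace GT

/-- A Gelfand–Tsetlin tableau: an assignment of a complex number to each position `(i,j)`.
Only positions in the vertex set `Vtx n` are relevant. -/
abbrev Tableau := ℕ × ℕ → ℂ

/-- The vertex set `𝔙 = {(i,j) : 1 ≤ j ≤ i ≤ n}`. -/
def Vtx (n : ℕ) : Set (ℕ × ℕ) := {p | 1 ≤ p.2 ∧ p.2 ≤ p.1 ∧ p.1 ≤ n}

/-- `z ∈ ℤ_{≥0}` (as a complex number). -/
def IsNonnegInt (z : ℂ) : Prop := ∃ m : ℕ, z = (m : ℂ)

/-- `z ∈ ℤ_{>0}` (as a complex number). -/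
def IsPosInt (z : ℂ) : Prop := ∃ m : ℕ, z = (m : ℂ) + 1

/-- `z ∈ ℤ` (as a complex number). -/
def IsInt (z : ℂ) : Prop := ∃ m : ℤ, z = (m : ℂ)

/-- The arrow relation of the graph `G(M)` associated with a tableau `M`. -/
def graphOf (n : ℕ) (M : Tableau) : (ℕ × ℕ) → (ℕ × ℕ) → Prop := fun a b =>
  a ∈ Vtx n ∧ b ∈ Vtx n ∧
    ((a.1 = b.1 + 1 ∧ IsNonnegInt (M a - M b)) ∨
     (b.1 = a.1 + 1 ∧ IsPosInt (M a - M b)) ∨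
     (a.1 = n ∧ b.1 = n ∧ a.2 ≠ b.2 ∧ IsNonnegInt (M a - M b)))

/-- The arrow relation of `Ḡ`: an arrow `a → b` iff there is a directed path in `G`
from `a` to `b` with `|a.1 - b.1| = 1`, or `a, b` are distinct vertices in row `n`. -/
def bar (n : ℕ) (E : (ℕ × ℕ) → (ℕ × ℕ) → Prop) : (ℕ × ℕ) → (ℕ × ℕ) → Prop := fun a b =>
  (Relation.TransGen E a b ∧ (a.1 = b.1 + 1 ∨ b.1 = a.1 + 1)) ∨
  (a ∈ Vtx n ∧ b ∈ Vtx n ∧ a.1 = n ∧ b.1 = n ∧ a.2 ≠ b.2)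

/-- The graph difference `G ∖ H` (on arrow relations). -/
def gdiff (E F : (ℕ × ℕ) → (ℕ × ℕ) → Prop) : (ℕ × ℕ) → (ℕ × ℕ) → Prop :=
  fun a b => E a b ∧ ¬ F a b

/-- `E⁺_H`: the set of arrows of `H` pointing down (from row `k+1` to row `k`). -/
def Eplus (E : (ℕ × ℕ) → (ℕ × ℕ) → Prop) : Set ((ℕ × ℕ) × (ℕ × ℕ)) :=
  {p | E p.1 p.2 ∧ p.1.1 = p.2.1 + 1}

/-- `𝔙_H`: the set of vertices incident to some arrow of `H`. -/
def VtxOf (E : (ℕ × ℕ) → (ℕ × ℕ) → Prop) : Set (ℕ × ℕ) :=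
  {a | (∃ b, E a b) ∨ (∃ b, E b a)}

/-- `((k,i),(k,j))` is an adjoining pair of vertices in the graph with arrow relation `E`. -/
def Adjoining (n : ℕ) (E : (ℕ × ℕ) → (ℕ × ℕ) → Prop) (k i j : ℕ) : Prop :=
  1 ≤ i ∧ i < j ∧ j ≤ k ∧ k ≤ n - 1 ∧ Relation.TransGen E (k, i) (k, j) ∧
    ∀ t, i < t → t < j →
      ¬ Relation.TransGen E (k, i) (k, t) ∧ ¬ Relation.TransGen E (k, t) (k, j)

/-- The arrow relation `E` is a relation graph on `𝔙`. -/
def IsRelationGraph (n : ℕ) (E : (ℕ × ℕ) → (ℕ × ℕ) → Prop) : Prop :=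
  -- (i) arrows join vertices of 𝔙 in consecutive rows, or two distinct vertices in row n
  (∀ a b, E a b → a ∈ Vtx n ∧ b ∈ Vtx n ∧
      (a.1 = b.1 + 1 ∨ b.1 = a.1 + 1 ∨ (a.1 = n ∧ b.1 = n ∧ a.2 ≠ b.2))) ∧
  -- (ii) no directed path from (k,j) to (k,i) for 1 ≤ i < j ≤ k
  (∀ k i j : ℕ, 1 ≤ i → i < j → j ≤ k → ¬ Relation.TransGen E (k, j) (k, i)) ∧
  -- (iii) no oriented cycles
  (∀ a, ¬ Relation.TransGen E a a) ∧
  -- (iv) vertices in a row k < n in the same connected component are joined by a directed path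
  (∀ k i j : ℕ, k < n → (k, i) ∈ Vtx n → (k, j) ∈ Vtx n → i ≠ j →
      Relation.EqvGen E (k, i) (k, j) →
      Relation.TransGen E (k, i) (k, j) ∨ Relation.TransGen E (k, j) (k, i)) ∧
  -- (v) no crossing pair of down arrows
  (∀ k r s i j : ℕ, r < s → i < j → ¬ (E (k+1, r) (k, j) ∧ E (k+1, s) (k, i))) ∧
  -- (vi) condition on adjoining pairs
  (∀ k i j : ℕ, Adjoining n E k i j →
      (∃ p q, E (k, i) (k+1, p) ∧ E (k+1, p) (k, j) ∧
              E (k, i) (k-1, q) ∧ E (k-1, q) (k, j)) ∨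
      (∃ s t, s < t ∧ E (k, i) (k+1, s) ∧ E (k+1, t) (k, j)))

/-- The tableau `M` satisfies the graph with arrow relation `E`. -/
def Satisfies (n : ℕ) (M : Tableau) (E : (ℕ × ℕ) → (ℕ × ℕ) → Prop) : Prop :=
  ∀ i j r s : ℕ, E (i, j) (r, s) →
    ((i = r + 1 ∨ (i = n ∧ r = n ∧ j < s)) → IsNonnegInt (M (i, j) - M (r, s))) ∧
    (r = i + 1 → IsPosInt (M (i, j) - M (r, s)))

/-- The tableau `M` is a `G`-realization, for `G` the graph with arrow relation `E`. -/
def IsRealization (n : ℕ) (E : (ℕ × ℕ) → (ℕ × ℕ) → Prop) (M : Tableau) : Prop :=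
  Satisfies n M E ∧
  ∀ k i j : ℕ, k ≤ n - 1 → (k, i) ∈ Vtx n → (k, j) ∈ Vtx n → i ≠ j →
    IsInt (M (k, i) - M (k, j)) → Relation.EqvGen E (k, i) (k, j)

/-- `z ∈ ℤ₀`: an integral vector indexed by `𝔙` vanishing on row `n`. -/
def ZZ0 (n : ℕ) (z : ℕ × ℕ → ℤ) : Prop :=
  (∀ i, z (n, i) = 0) ∧ ∀ p, p ∉ Vtx n → z p = 0

/-- The tableau `T(M + z)`. -/
def addZ (M : Tableau) (z : ℕ × ℕ → ℤ) : Tableau := fun p => M p + (z p : ℂ)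

/-- The vector `c · δ^v ∈ ℤ₀`. -/
def sing (v : ℕ × ℕ) (c : ℤ) : ℕ × ℕ → ℤ := fun p => if p = v then c else 0

/-- `B_G(T(L))`: the set of all `G`-realizations of the form `T(L+z)` with `z ∈ ℤ₀`. -/
def BG (n : ℕ) (E : (ℕ × ℕ) → (ℕ × ℕ) → Prop) (L : Tableau) : Set Tableau :=
  {M | ∃ z : ℕ × ℕ → ℤ, ZZ0 n z ∧ M = addZ L z ∧ IsRealization n E M}

/-- The coefficient of `T(M + δ^{ki})` in `E_{k,k+1}(T(M))`. -/
noncomputable def raiseCoeff (M : Tableau) (k i : ℕ) : ℂ :=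
  -((∏ j ∈ Finset.Icc 1 (k+1), (M (k, i) - M (k+1, j))) /
    (∏ j ∈ (Finset.Icc 1 k).erase i, (M (k, i) - M (k, j))))

/-- The coefficient of `T(M - δ^{ki})` in `E_{k+1,k}(T(M))`. -/
noncomputable def lowerCoeff (M : Tableau) (k i : ℕ) : ℂ :=
  (∏ j ∈ Finset.Icc 1 (k-1), (M (k, i) - M (k-1, j))) /
    (∏ j ∈ (Finset.Icc 1 k).erase i, (M (k, i) - M (k, j)))

/-- The eigenvalue of `E_{kk}` on `T(M)`. -/
noncomputable def diagCoeff (M : Tableau) (k : ℕ) : ℂ :=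
  ((k : ℂ) - 1) + (∑ i ∈ Finset.Icc 1 k, M (k, i)) - (∑ i ∈ Finset.Icc 1 (k-1), M (k-1, i))

/-- The tableau `T(M + c·δ^{ki})`. -/
def shift (M : Tableau) (k i : ℕ) (c : ℤ) : Tableau :=
  fun p => M p + if p = (k, i) then (c : ℂ) else 0

/-- The basis vector of `M` in the space with basis `B`, or `0` if `M ∉ B`. -/
noncomputable def emb (B : Set Tableau) (M : Tableau) : (↥B →₀ ℂ) := by
  classical exact if h : M ∈ B then Finsupp.single (⟨M, h⟩ : ↥B) 1 else 0

/-- The Gelfand–Tsetlin operator `E_{k,k+1}` on the space with basis `B`. -/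
noncomputable def raiseOp (B : Set Tableau) (k : ℕ) : (↥B →₀ ℂ) →ₗ[ℂ] (↥B →₀ ℂ) :=
  Finsupp.lsum ℂ fun T => LinearMap.toSpanSingleton ℂ _
    (∑ i ∈ Finset.Icc 1 k, raiseCoeff (T : Tableau) k i • emb B (shift (T : Tableau) k i 1))

/-- The Gelfand–Tsetlin operator `E_{k+1,k}` on the space with basis `B`. -/
noncomputable def lowerOp (B : Set Tableau) (k : ℕ) : (↥B →₀ ℂ) →ₗ[ℂ] (↥B →₀ ℂ) :=
  Finsupp.lsum ℂ fun T => LinearMap.toSpanSingleton ℂ _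
    (∑ i ∈ Finset.Icc 1 k, lowerCoeff (T : Tableau) k i • emb B (shift (T : Tableau) k i (-1)))

/-- The Gelfand–Tsetlin operator `E_{kk}` on the space with basis `B`. -/
noncomputable def diagOp (B : Set Tableau) (k : ℕ) : (↥B →₀ ℂ) →ₗ[ℂ] (↥B →₀ ℂ) :=
  Finsupp.lsum ℂ fun T => LinearMap.toSpanSingleton ℂ _
    (diagCoeff (T : Tableau) k • Finsupp.single T (1 : ℂ))

/-- A subspace of the space with basis `B` is a submodule if it is invariant under all the
Gelfand–Tsetlin operators `E_{k,k+1}`, `E_{k+1,k}` (1 ≤ k ≤ n-1) and `E_{kk}` (1 ≤ k ≤ n). -/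
def IsSubmoduleGT (n : ℕ) (B : Set Tableau) (W : Submodule ℂ (↥B →₀ ℂ)) : Prop :=
  (∀ k, 1 ≤ k → k ≤ n - 1 → ∀ v ∈ W, raiseOp B k v ∈ W ∧ lowerOp B k v ∈ W) ∧
  (∀ k, 1 ≤ k → k ≤ n → ∀ v ∈ W, diagOp B k v ∈ W)

/-- `U · T(R)`: the smallest submodule containing the basis tableau `T`. -/
noncomputable def genSub (n : ℕ) (B : Set Tableau) (T : ↥B) : Submodule ℂ (↥B →₀ ℂ) :=
  sInf {W | IsSubmoduleGT n B W ∧ Finsupp.single T 1 ∈ W}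

/-- `T(R) ≼₍₁₎ T(Q)`: the tableau `Q` appears with nonzero coefficient in `g · T(R)` for one
of the Gelfand–Tsetlin operators `g`. -/
def Prec1 (n : ℕ) (B : Set Tableau) (R Q : ↥B) : Prop :=
  (∃ k, 1 ≤ k ∧ k ≤ n - 1 ∧
    ((raiseOp B k (Finsupp.single R 1)) Q ≠ 0 ∨ (lowerOp B k (Finsupp.single R 1)) Q ≠ 0)) ∨
  (∃ k, 1 ≤ k ∧ k ≤ n ∧ (diagOp B k (Finsupp.single R 1)) Q ≠ 0)

lemma not_isNonnegInt_neg_one : ¬ IsNonnegInt (-1 : ℂ) := by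
  rintro ⟨m, hm⟩
  have h1 : ((m + 1 : ℕ) : ℂ) = 0 := by push_cast; linear_combination -hm
  exact Nat.succ_ne_zero m (Nat.cast_eq_zero.mp h1)

lemma arrow_diff {n : ℕ} {E : (ℕ × ℕ) → (ℕ × ℕ) → Prop} (hE : IsRelationGraph n E)
    {M : Tableau} (hM : Satisfies n M E) {a b : ℕ × ℕ} (h : E a b) :
    ∃ N : ℕ, M a - M b = N ∧ (N = 0 → (b.1 < a.1 ∨ (a.1 = n ∧ b.1 = n))) := by
  obtain ⟨ha, hb, hrow⟩ := hE.1 a b h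
  have hsat := hM a.1 a.2 b.1 b.2 (by simpa using h)
  rcases hrow with h1 | h2 | ⟨h3a, h3b, h3ne⟩
  · obtain ⟨m, hm⟩ := hsat.1 (Or.inl h1)
    exact ⟨m, hm, fun _ => Or.inl (by omega)⟩
  · obtain ⟨m, hm⟩ := hsat.2 h2
    exact ⟨m + 1, by push_cast; linear_combination hm, by omega⟩
  · have hlt : a.2 < b.2 := by
      rcases lt_or_gt_of_ne h3ne with h' | h'
      · exact h'
      · exfalso
        refine hE.2.1 n b.2 a.2 hb.1 h' (h3a ▸ ha.2.1) ?_
        refine Relation.TransGen.single ?_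
        have ea : ((n, a.2) : ℕ × ℕ) = a := by rw [← h3a]
        have eb : ((n, b.2) : ℕ × ℕ) = b := by rw [← h3b]
        rw [ea, eb]; exact h
    obtain ⟨m, hm⟩ := hsat.1 (Or.inr ⟨h3a, h3b, hlt⟩)
    exact ⟨m, hm, fun _ => Or.inr ⟨h3a, h3b⟩⟩

lemma path_diff {n : ℕ} {E : (ℕ × ℕ) → (ℕ × ℕ) → Prop} (hE : IsRelationGraph n E)
    {M : Tableau} (hM : Satisfies n M E) {a b : ℕ × ℕ} (h : Relation.TransGen E a b) :
    ∃ N : ℕ, M a - M b = N ∧ (N = 0 → (b.1 < a.1 ∨ (a.1 = n ∧ b.1 = n))) := by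
  induction h with
  | single h => exact arrow_diff hE hM h
  | tail _ hbc ih =>
    obtain ⟨N1, h1, h1'⟩ := ih
    obtain ⟨N2, h2, h2'⟩ := arrow_diff hE hM hbc
    refine ⟨N1 + N2, by push_cast; linear_combination h1 + h2, ?_⟩
    intro hN0
    rcases h1' (by omega) with h | h <;> rcases h2' (by omega) with h' | h' <;> omega

lemma row_ne {n : ℕ} {E : (ℕ × ℕ) → (ℕ × ℕ) → Prop} (hE : IsRelationGraph n E)
    {M : Tableau} (hM : IsRealization n E M) {k i j : ℕ} (hk : k ≤ n - 1) (hn : 2 ≤ n)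
    (hi : (k, i) ∈ Vtx n) (hj : (k, j) ∈ Vtx n) (hij : i ≠ j) :
    M (k, i) ≠ M (k, j) := by
  intro heq
  have hint : IsInt (M (k, i) - M (k, j)) := ⟨0, by rw [heq]; simp⟩
  have heqv := hM.2 k i j hk hi hj hij hint
  have hkn : k < n := by omega
  rcases hE.2.2.2.1 k i j hkn hi hj hij heqv with h | h
  · obtain ⟨N, hN, hN'⟩ := path_diff hE hM.1 h
    have hNne : N ≠ 0 := fun h0 => by rcases hN' h0 with h' | h' <;> omega
    exact hNne (Nat.cast_eq_zero.mp (by rw [← hN, heq, sub_self]))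
  · obtain ⟨N, hN, hN'⟩ := path_diff hE hM.1 h
    have hNne : N ≠ 0 := fun h0 => by rcases hN' h0 with h' | h' <;> omega
    exact hNne (Nat.cast_eq_zero.mp (by rw [← hN, heq, sub_self]))

lemma eval_sum (B : Set Tableau) (k i : ℕ) (hik : i ∈ Finset.Icc 1 k)
    (R : Tableau) (c : ℤ) (hc : c ≠ 0) (ha : shift R k i c ∈ B) (coef : ℕ → ℂ) :
    (∑ i' ∈ Finset.Icc 1 k, coef i' • emb B (shift R k i' c))
      (⟨shift R k i c, ha⟩ : ↥B) = coef i := by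
  classical
  rw [Finsupp.finset_sum_apply, Finset.sum_eq_single i]
  · rw [Finsupp.smul_apply, emb, dif_pos ha, Finsupp.single_apply, if_pos rfl,
      smul_eq_mul, mul_one]
  · intro i' hi' hii
    have hne : shift R k i' c ≠ shift R k i c := by
      intro he
      have hv : R (k, i) + (if ((k, i) : ℕ × ℕ) = (k, i') then (c : ℂ) else 0) =
          R (k, i) + (if ((k, i) : ℕ × ℕ) = (k, i) then (c : ℂ) else 0) :=
        congrFun he (k, i)
      rw [if_neg (show ¬(((k, i) : ℕ × ℕ) = (k, i')) by
          simp only [Prod.mk.injEq, not_and]; exact fun _ h => hii h.symm),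
        if_pos rfl] at hv
      exact hc (Int.cast_eq_zero.mp (by linear_combination -hv))
    by_cases hmem : shift R k i' c ∈ B
    · rw [Finsupp.smul_apply, emb, dif_pos hmem, Finsupp.single_apply,
        if_neg (by simpa [Subtype.ext_iff] using hne), smul_zero]
    · rw [Finsupp.smul_apply, emb, dif_neg hmem, Finsupp.coe_zero, Pi.zero_apply, smul_zero]
  · exact fun h => absurd hik h

/-- Single-step generation: if `T(R±δ^{ki})` lies in `B_G(T(L))` and adding/subtracting
`δ^{ki}` preserves the down arrows, then the corresponding Gelfand–Tsetlin numerator is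
nonzero, so `T(R±δ^{ki})` appears with nonzero coefficient in `E_{k,k+1}(T(R))`
(resp. `E_{k+1,k}(T(R))`), i.e. `T(R) ≼₍₁₎ T(R±δ^{ki})`. -/
theorem single_step_generation
    (n : ℕ) (hn : 2 ≤ n) (E : (ℕ × ℕ) → (ℕ × ℕ) → Prop) (hE : IsRelationGraph n E)
    (L : Tableau) (hL : IsRealization n E L)
    (R : Tableau) (hR : R ∈ BG n E L)
    (k i : ℕ) (hi : 1 ≤ i) (hik : i ≤ k) (hk : k ≤ n - 1) :
    (∀ ha : shift R k i 1 ∈ BG n E L,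
      Eplus (graphOf n R) ⊆ Eplus (graphOf n (shift R k i 1)) →
      (∏ j ∈ Finset.Icc 1 (k+1), (R (k, i) - R (k+1, j))) ≠ 0 ∧
      (raiseOp (BG n E L) k (Finsupp.single (⟨R, hR⟩ : ↥(BG n E L)) 1))
          (⟨shift R k i 1, ha⟩ : ↥(BG n E L)) ≠ 0) ∧
    (∀ hb : shift R k i (-1) ∈ BG n E L,
      Eplus (graphOf n R) ⊆ Eplus (graphOf n (shift R k i (-1))) →
      (∏ j ∈ Finset.Icc 1 (k-1), (R (k, i) - R (k-1, j))) ≠ 0 ∧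
      (lowerOp (BG n E L) k (Finsupp.single (⟨R, hR⟩ : ↥(BG n E L)) 1))
          (⟨shift R k i (-1), hb⟩ : ↥(BG n E L)) ≠ 0) := by
    classical
  obtain ⟨z, hz0, hzR, hRreal⟩ := id hR
  have hiIcc : i ∈ Finset.Icc 1 k := Finset.mem_Icc.mpr ⟨hi, hik⟩
  have hkin : (k, i) ∈ Vtx n := ⟨hi, hik, by omega⟩
  have hden : (∏ j ∈ (Finset.Icc 1 k).erase i, (R (k, i) - R (k, j))) ≠ 0 := by
    rw [Finset.prod_ne_zero_iff]
    intro j hj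
    obtain ⟨hji, hj'⟩ := Finset.mem_erase.mp hj
    rw [Finset.mem_Icc] at hj'
    exact sub_ne_zero.mpr
      (row_ne hE hRreal hk hn hkin ⟨hj'.1, hj'.2, by omega⟩ (Ne.symm hji))
  constructor
  · intro ha hsub
    have hnum : (∏ j ∈ Finset.Icc 1 (k + 1), (R (k, i) - R (k + 1, j))) ≠ 0 := by
      rw [Finset.prod_ne_zero_iff]
      intro j hj hzero
      rw [Finset.mem_Icc] at hj
      rw [sub_eq_zero] at hzero
      have harr : ((k + 1, j), (k, i)) ∈ Eplus (graphOf n R) := by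
        refine ⟨?_, rfl⟩
        show graphOf n R (k + 1, j) (k, i)
        exact ⟨⟨hj.1, hj.2, show k + 1 ≤ n by omega⟩, hkin,
          Or.inl ⟨rfl, ⟨0, show R (k + 1, j) - R (k, i) = ((0 : ℕ) : ℂ) by
            rw [hzero]; simp⟩⟩⟩
      obtain ⟨⟨-, -, hcase⟩, -⟩ := hsub harr
      rcases hcase with ⟨-, hm⟩ | ⟨habs, -⟩ | ⟨-, habs, -⟩
      · apply not_isNonnegInt_neg_one
        have hm' : IsNonnegInt (shift R k i 1 (k + 1, j) - shift R k i 1 (k, i)) := hm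
        have e : shift R k i 1 (k + 1, j) - shift R k i 1 (k, i) = -1 := by
          show (R (k + 1, j) + if ((k + 1, j) : ℕ × ℕ) = (k, i) then ((1 : ℤ) : ℂ) else 0) -
            (R (k, i) + if ((k, i) : ℕ × ℕ) = (k, i) then ((1 : ℤ) : ℂ) else 0) = -1
          rw [if_neg (show ¬((k + 1, j) = ((k, i) : ℕ × ℕ)) by
            simp only [Prod.mk.injEq, not_and]; omega),
            if_pos rfl, ← hzero]
          push_cast; ring
        rwa [e] at hm'
      · exact absurd (show k = k + 1 + 1 from habs) (by omega)
      · exact absurd (show k = n from habs) (by omega)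
    refine ⟨hnum, ?_⟩
    have hop : (raiseOp (BG n E L) k) (Finsupp.single (⟨R, hR⟩ : ↥(BG n E L)) 1) =
        ∑ i' ∈ Finset.Icc 1 k, raiseCoeff R k i' • emb (BG n E L) (shift R k i' 1) := by
      simp [raiseOp]
    rw [hop, eval_sum (BG n E L) k i hiIcc R 1 one_ne_zero ha]
    simp only [raiseCoeff, neg_ne_zero]
    exact div_ne_zero hnum hden
  · intro hb hsub
    have hnum : (∏ j ∈ Finset.Icc 1 (k - 1), (R (k, i) - R (k - 1, j))) ≠ 0 := by
      rw [Finset.prod_ne_zero_iff]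
      intro j hj hzero
      rw [Finset.mem_Icc] at hj
      rw [sub_eq_zero] at hzero
      have hk2 : 2 ≤ k := by omega
      have harr : ((k, i), (k - 1, j)) ∈ Eplus (graphOf n R) := by
        refine ⟨?_, show k = k - 1 + 1 by omega⟩
        show graphOf n R (k, i) (k - 1, j)
        exact ⟨hkin, ⟨hj.1, hj.2, show k - 1 ≤ n by omega⟩,
          Or.inl ⟨show k = k - 1 + 1 by omega,
            ⟨0, show R (k, i) - R (k - 1, j) = ((0 : ℕ) : ℂ) by rw [hzero]; simp⟩⟩⟩
      obtain ⟨⟨-, -, hcase⟩, -⟩ := hsub harr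
      rcases hcase with ⟨-, hm⟩ | ⟨habs, -⟩ | ⟨habs, -⟩
      · apply not_isNonnegInt_neg_one
        have hm' : IsNonnegInt (shift R k i (-1) (k, i) - shift R k i (-1) (k - 1, j)) := hm
        have e : shift R k i (-1) (k, i) - shift R k i (-1) (k - 1, j) = -1 := by
          show (R (k, i) + if ((k, i) : ℕ × ℕ) = (k, i) then ((-1 : ℤ) : ℂ) else 0) -
            (R (k - 1, j) + if ((k - 1, j) : ℕ × ℕ) = (k, i) then ((-1 : ℤ) : ℂ) else 0) = -1
          rw [if_pos rfl, if_neg (show ¬((k - 1, j) = ((k, i) : ℕ × ℕ)) by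
            simp only [Prod.mk.injEq, not_and]; omega),
            ← hzero]
          push_cast; ring
        rwa [e] at hm'
      · exact absurd (show k - 1 = k + 1 from habs) (by omega)
      · exact absurd (show k = n from habs) (by omega)
    refine ⟨hnum, ?_⟩
    have hop : (lowerOp (BG n E L) k) (Finsupp.single (⟨R, hR⟩ : ↥(BG n E L)) 1) =
        ∑ i' ∈ Finset.Icc 1 k, lowerCoeff R k i' • emb (BG n E L) (shift R k i' (-1)) := by
      simp [lowerOp]
    rw [hop, eval_sum (BG n E L) k i hiIcc R (-1) (by norm_num) hb]
    simp only [lowerCoeff]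
    exact div_ne_zero hnum hden
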